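/- Let g be a real Lie algebra with a hypercomplex structure (I,J,K) and Obata connection ∇, and let α ∈ g* be a ∇-parallel 1-form. Then α vanishes on H[g,g]: α(z) = 0 for every z ∈ span([g,g] ∪ I[g,g] ∪ J[g,g] ∪ K[g,g]). -/
import Mathlib


open Submodule

section Hyper

variable {L : Type*} [LieRing L] [LieAlgebra ℝ L]

/-- A complex structure operator on a real Lie algebra: `I² = -id` and the integrability
identity `[IX,IY] = [X,Y] + I[IX,Y] + I[X,IY]` (equivalent to `g^{1,0}` being a subalgebra). -/
def IsComplexStructureOp (I : L →ₗ[ℝ] L) : Prop :=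
  (∀ x, I (I x) = -x) ∧ ∀ x y : L, ⁅I x, I y⁆ = ⁅x, y⁆ + I ⁅I x, y⁆ + I ⁅x, I y⁆

/-- A hypercomplex structure: a triple of complex structure operators with `IJ = K`
(together with `I² = J² = K² = -id` this gives the quaternionic relations). -/
structure IsHypercomplex (I J K : L →ₗ[ℝ] L) : Prop where
  hI : IsComplexStructureOp I
  hJ : IsComplexStructureOp J
  hK : IsComplexStructureOp K
  hIJ : ∀ x, I (J x) = K x

/-- The Obata connection `∇_X` as an endomorphism of `L`:
`∇_X Y = ½([X,Y] + I[IX,Y] − J[X,JY] + K[IX,JY])`. -/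
noncomputable def obataOp (I J K : L →ₗ[ℝ] L) (X : L) : Module.End ℝ L :=
  (1/2 : ℝ) • (LieAlgebra.ad ℝ L X + I ∘ₗ LieAlgebra.ad ℝ L (I X)
    - J ∘ₗ LieAlgebra.ad ℝ L X ∘ₗ J + K ∘ₗ LieAlgebra.ad ℝ L (I X) ∘ₗ J)

/-- Flatness of the Obata connection. -/
def ObataFlat (I J K : L →ₗ[ℝ] L) : Prop :=
  ∀ X Y Z : L, obataOp I J K X (obataOp I J K Y Z) - obataOp I J K Y (obataOp I J K X Z)
    = obataOp I J K ⁅X, Y⁆ Z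

/-- The set of brackets of elements of a subspace `W`. -/
def bracketSet (W : Submodule ℝ L) : Set L := {z : L | ∃ x ∈ W, ∃ y ∈ W, z = ⁅x, y⁆}

/-- `H[W,W] = span([W,W] ∪ I[W,W] ∪ J[W,W] ∪ K[W,W])`. -/
def Hbr (I J K : L →ₗ[ℝ] L) (W : Submodule ℝ L) : Submodule ℝ L :=
  span ℝ (bracketSet W ∪ I '' bracketSet W ∪ J '' bracketSet W ∪ K '' bracketSet W)

/-- The descending series `g_0^H = g`, `g_i^H = H[g_{i-1}^H, g_{i-1}^H]`. -/
def gH (I J K : L →ₗ[ℝ] L) : ℕ → Submodule ℝ L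
  | 0 => ⊤
  | i + 1 => Hbr I J K (gH I J K i)

end Hyper

section AuxProof

variable {L : Type*} [LieRing L] [LieAlgebra ℝ L] {I J K : L →ₗ[ℝ] L}

lemma obata_apply (I J K : L →ₗ[ℝ] L) (X Y : L) :
    obataOp I J K X Y = (1/2:ℝ) • (⁅X, Y⁆ + I ⁅I X, Y⁆ - J ⁅X, J Y⁆ + K ⁅I X, J Y⁆) := by
  simp [obataOp, LieAlgebra.ad_apply, LinearMap.smul_apply, LinearMap.add_apply,
    LinearMap.sub_apply, LinearMap.comp_apply]

lemma quat_JI (h : IsHypercomplex I J K) (x : L) : J (I x) = -K x := by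
  have key : ∀ y : L, J (I (J y)) = I y := by
    intro y
    have h1 : I (J (I (J y))) = -y := by rw [h.hIJ, h.hIJ]; exact h.hK.1 y
    have h2 := congrArg I h1
    rw [h.hI.1] at h2
    simpa using h2
  have h3 := key (-(J x))
  simp only [map_neg, h.hJ.1, neg_neg] at h3
  rw [h3, h.hIJ]

lemma quat_IK (h : IsHypercomplex I J K) (x : L) : I (K x) = -J x := by
  rw [← h.hIJ, h.hI.1]

lemma quat_KI (h : IsHypercomplex I J K) (x : L) : K (I x) = J x := by
  rw [← h.hIJ, quat_JI h, map_neg, quat_IK h, neg_neg]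

lemma quat_KJ (h : IsHypercomplex I J K) (x : L) : K (J x) = -I x := by
  rw [← h.hIJ, h.hJ.1, map_neg]

lemma quat_JK (h : IsHypercomplex I J K) (x : L) : J (K x) = I x := by
  rw [← h.hIJ, quat_JI h, quat_KJ h, neg_neg]

lemma obata_torsion (h : IsHypercomplex I J K) (X Y : L) :
    obataOp I J K X Y - obataOp I J K Y X = ⁅X, Y⁆ := by
  have hA := h.hI.2 X Y
  have hB := h.hJ.2 X Y
  have hK0 := h.hK.2 (J X) (I Y)
  rw [quat_KJ h, quat_KI h] at hK0
  have hK2 := congrArg K hK0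
  simp only [map_add, map_neg, neg_lie, h.hK.1, quat_KJ h, quat_KI h, neg_neg] at hK2
  have hs1 : ⁅Y, X⁆ = -⁅X, Y⁆ := (lie_skew Y X).symm ▸ rfl
  have hs2 : I ⁅I Y, X⁆ = -I ⁅X, I Y⁆ := by rw [← map_neg]; congr 1; exact (lie_skew (I Y) X).symm ▸ rfl
  have hs3 : J ⁅Y, J X⁆ = -J ⁅J X, Y⁆ := by rw [← map_neg]; congr 1; exact (lie_skew Y (J X)).symm ▸ rfl
  have hs4 : K ⁅I Y, J X⁆ = -K ⁅J X, I Y⁆ := by rw [← map_neg]; congr 1; exact (lie_skew (I Y) (J X)).symm ▸ rfl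
  rw [obata_apply, obata_apply]
  rw [hs1, hs2, hs3, hs4]
  linear_combination (norm := module) (-((1:ℝ)/2)) • hA + ((1:ℝ)/2) • hB - ((1:ℝ)/2) • hK2

lemma obata_Ipar (h : IsHypercomplex I J K) (X Y : L) :
    obataOp I J K X (I Y) = I (obataOp I J K X Y) := by
  have hb := h.hI.2 X (J Y)
  rw [h.hIJ] at hb
  have hA := congrArg I (h.hI.2 X Y)
  simp only [map_add, h.hI.1] at hA
  have hC := congrArg K hb
  simp only [map_add, quat_KI h] at hC
  rw [obata_apply, obata_apply, map_smul]
  simp only [map_add, map_sub, map_neg, quat_JI h, h.hIJ, quat_IK h, h.hI.1, lie_neg,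
    neg_lie, neg_neg]
  linear_combination (norm := module) ((1:ℝ)/2) • hA - ((1:ℝ)/2) • hC

lemma obata_Jpar (h : IsHypercomplex I J K) (X Y : L) :
    obataOp I J K X (J Y) = J (obataOp I J K X Y) := by
  rw [obata_apply, obata_apply, map_smul]
  simp only [map_add, map_sub, map_neg, h.hJ.1, quat_JI h, quat_JK h, lie_neg, neg_lie,
    neg_neg]
  module

lemma obata_Kpar (h : IsHypercomplex I J K) (X Y : L) :
    obataOp I J K X (K Y) = K (obataOp I J K X Y) := by
  have hb := h.hI.2 X (J Y)
  rw [h.hIJ] at hb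
  have hD := congrArg I hb
  simp only [map_add, h.hI.1] at hD
  have hE := congrArg K (h.hI.2 X Y)
  simp only [map_add, quat_KI h] at hE
  rw [obata_apply, obata_apply, map_smul]
  simp only [map_add, map_sub, map_neg, quat_JK h, quat_KI h, quat_KJ h, h.hK.1, lie_neg,
    neg_lie, neg_neg]
  linear_combination (norm := module) ((1:ℝ)/2) • hD + ((1:ℝ)/2) • hE

end AuxProof



/-- every Obata-parallel 1-form vanishes on `H[g,g]`. -/
theorem parallel_form_vanishes_on_Hbr {L : Type*} [LieRing L] [LieAlgebra ℝ L]
    (I J K : L →ₗ[ℝ] L) (h : IsHypercomplex I J K)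
    (α : L →ₗ[ℝ] ℝ) (hpar : ∀ X Y : L, α (obataOp I J K X Y) = 0) :
    ∀ z ∈ Hbr I J K ⊤, α z = 0 := by
  intro z hz
  have key : ∀ w ∈ bracketSet (⊤ : Submodule ℝ L),
      α w = 0 ∧ α (I w) = 0 ∧ α (J w) = 0 ∧ α (K w) = 0 := by
    rintro w ⟨x, -, y, -, rfl⟩
    have ht := obata_torsion h x y
    refine ⟨?_, ?_, ?_, ?_⟩
    · rw [← ht, map_sub, hpar, hpar, sub_zero]
    · have : I ⁅x, y⁆ = obataOp I J K x (I y) - obataOp I J K y (I x) := by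
        rw [← ht, map_sub, obata_Ipar h, obata_Ipar h]
      rw [this, map_sub, hpar, hpar, sub_zero]
    · have : J ⁅x, y⁆ = obataOp I J K x (J y) - obataOp I J K y (J x) := by
        rw [← ht, map_sub, obata_Jpar h, obata_Jpar h]
      rw [this, map_sub, hpar, hpar, sub_zero]
    · have : K ⁅x, y⁆ = obataOp I J K x (K y) - obataOp I J K y (K x) := by
        rw [← ht, map_sub, obata_Kpar h, obata_Kpar h]
      rw [this, map_sub, hpar, hpar, sub_zero]
  induction hz using Submodule.span_induction with
  | mem x hx =>
    rcases hx with ((hx | ⟨w, hw, rfl⟩) | ⟨w, hw, rfl⟩) | ⟨w, hw, rfl⟩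
    · exact (key x hx).1
    · exact (key w hw).2.1
    · exact (key w hw).2.2.1
    · exact (key w hw).2.2.2
  | zero => simp
  | add x y _ _ hx hy => simp [hx, hy]
  | smul c x _ hx => simp [hx]
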